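/- With B(x) and C(x) the compositional inverses of (2e^x-2-2x)^{1/2} and (-2log(1+x)+2x)^{1/2} respectively, one has C(x) - B(x) = x²/2 as formal power series; in particular the coefficients of B and C agree in every degree except degree 2. -/

import Mathlib

/-- Composition `f ∘ g` of formal power series (intended for `g` with zero constant term). -/
noncomputable def pcomp {A : Type*} [CommRing A] (f g : PowerSeries A) : PowerSeries A :=
  PowerSeries.mk fun n =>
    PowerSeries.coeff (R := A) n
      (∑ k ∈ Finset.range (n + 1), PowerSeries.C (R := A) (PowerSeries.coeff (R := A) k f) * g ^ k)

/-- The formal power series `log(1+X) = Σ_{n≥1} (-1)^{n+1} X^n/n`. -/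
noncomputable def logOneAdd : PowerSeries ℚ :=
  PowerSeries.mk fun n => if n = 0 then 0 else (-1 : ℚ) ^ (n + 1) / n

namespace PcompAux

open PowerSeries Finset

variable {f f₁ f₂ g h : PowerSeries ℚ}

lemma coeff_pow_eq_zero (hg : constantCoeff (R := ℚ) g = 0) {k n : ℕ} (hnk : n < k) :
    coeff (R := ℚ) n (g ^ k) = 0 := by
  have hdvd : (X : PowerSeries ℚ) ^ k ∣ g ^ k :=
    pow_dvd_pow_of_dvd (X_dvd_iff.mpr hg) k
  exact (X_pow_dvd_iff.mp hdvd) n hnk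

lemma coeff_pcomp (hg : constantCoeff (R := ℚ) g = 0) (f : PowerSeries ℚ) {n m : ℕ} (hnm : n ≤ m) :
    coeff (R := ℚ) n (pcomp f g) = ∑ k ∈ range (m + 1), coeff (R := ℚ) k f * coeff (R := ℚ) n (g ^ k) := by
  have h0 : coeff (R := ℚ) n (pcomp f g) = ∑ k ∈ range (n + 1), coeff (R := ℚ) k f * coeff (R := ℚ) n (g ^ k) := by
    simp [pcomp, coeff_mk, map_sum, coeff_C_mul]
  rw [h0]
  refine Finset.sum_subset (Finset.range_subset_range.mpr (by omega)) ?_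
  intro k hk hk'
  have hn : n < k := by
    simp only [Finset.mem_range] at hk hk'; omega
  rw [coeff_pow_eq_zero hg hn, mul_zero]

lemma constantCoeff_pcomp (f g : PowerSeries ℚ) :
    constantCoeff (R := ℚ) (pcomp f g) = constantCoeff (R := ℚ) f := by
  have : coeff (R := ℚ) 0 (pcomp f g) = coeff (R := ℚ) 0 f := by
    simp [pcomp, coeff_mk]
  simpa [coeff_zero_eq_constantCoeff] using this

lemma pcomp_mul (hg : constantCoeff (R := ℚ) g = 0) (f₁ f₂ : PowerSeries ℚ) :
    pcomp (f₁ * f₂) g = pcomp f₁ g * pcomp f₂ g := by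
  ext n
  set a := fun i : ℕ => coeff (R := ℚ) i f₁ with ha
  set b := fun j : ℕ => coeff (R := ℚ) j f₂ with hb
  set c := fun m : ℕ => coeff (R := ℚ) n (g ^ m) with hc
  -- triangle = square lemma
  have key : ∑ k ∈ range (n + 1), ∑ p ∈ Finset.HasAntidiagonal.antidiagonal k, a p.1 * b p.2 * c (p.1 + p.2)
      = ∑ i ∈ range (n + 1), ∑ j ∈ range (n + 1), a i * b j * c (i + j) := by
    have hdisj : (↑(range (n + 1)) : Set ℕ).PairwiseDisjoint
        (fun k => (Finset.HasAntidiagonal.antidiagonal k : Finset (ℕ × ℕ))) := by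
      intro x _ y _ hxy
      simp only [Finset.disjoint_left]
      intro p hp hp'
      rw [Finset.HasAntidiagonal.mem_antidiagonal] at hp hp'
      exact hxy (hp ▸ hp')
    rw [← Finset.sum_biUnion hdisj, ← Finset.sum_product']
    apply Finset.sum_subset
    · intro p hp
      simp only [Finset.mem_biUnion, Finset.mem_range, Finset.HasAntidiagonal.mem_antidiagonal,
        Finset.mem_product] at hp ⊢
      obtain ⟨k, hk, hpk⟩ := hp
      omega
    · intro p _ hp
      have hpn : n < p.1 + p.2 := by
        simp only [Finset.mem_biUnion, Finset.mem_range, Finset.HasAntidiagonal.mem_antidiagonal] at hp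
        by_contra hcon
        exact hp ⟨p.1 + p.2, by omega, rfl⟩
      simp only [hc]
      rw [coeff_pow_eq_zero hg hpn, mul_zero]
  have hL : coeff (R := ℚ) n (pcomp (f₁ * f₂) g)
      = ∑ k ∈ range (n + 1), ∑ p ∈ Finset.HasAntidiagonal.antidiagonal k, a p.1 * b p.2 * c (p.1 + p.2) := by
    rw [coeff_pcomp hg _ (le_refl n)]
    refine Finset.sum_congr rfl fun k _ => ?_
    rw [PowerSeries.coeff_mul, Finset.sum_mul]
    refine Finset.sum_congr rfl fun p hp => ?_
    rw [Finset.HasAntidiagonal.mem_antidiagonal] at hp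
    rw [hp]
  have hR : coeff (R := ℚ) n (pcomp f₁ g * pcomp f₂ g)
      = ∑ i ∈ range (n + 1), ∑ j ∈ range (n + 1), a i * b j * c (i + j) := by
    rw [PowerSeries.coeff_mul]
    have step : ∀ p ∈ Finset.HasAntidiagonal.antidiagonal n,
        coeff (R := ℚ) p.1 (pcomp f₁ g) * coeff (R := ℚ) p.2 (pcomp f₂ g)
        = ∑ i ∈ range (n + 1), ∑ j ∈ range (n + 1),
            a i * b j * (coeff (R := ℚ) p.1 (g ^ i) * coeff (R := ℚ) p.2 (g ^ j)) := by
      intro p hp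
      have h1 : p.1 ≤ n := Finset.HasAntidiagonal.antidiagonal.fst_le hp
      have h2 : p.2 ≤ n := Finset.HasAntidiagonal.antidiagonal.snd_le hp
      rw [coeff_pcomp hg f₁ h1, coeff_pcomp hg f₂ h2, Finset.sum_mul_sum]
      exact Finset.sum_congr rfl fun i _ => Finset.sum_congr rfl fun j _ => by ring
    rw [Finset.sum_congr rfl step, Finset.sum_comm]
    refine Finset.sum_congr rfl fun i _ => ?_
    rw [Finset.sum_comm]
    refine Finset.sum_congr rfl fun j _ => ?_
    rw [← Finset.mul_sum]
    simp only [hc]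
    congr 1
    rw [pow_add]
    exact (PowerSeries.coeff_mul _ _ _).symm
  rw [hL, hR, key]

lemma pcomp_add (f₁ f₂ g : PowerSeries ℚ) :
    pcomp (f₁ + f₂) g = pcomp f₁ g + pcomp f₂ g := by
  ext n
  simp [pcomp, coeff_mk, map_add, add_mul, Finset.sum_add_distrib]

lemma pcomp_one (hg : constantCoeff (R := ℚ) g = 0) : pcomp (1 : PowerSeries ℚ) g = 1 := by
  ext n
  rw [coeff_pcomp hg _ (le_refl n), Finset.sum_eq_single 0]
  · simp [PowerSeries.coeff_one]
  · intro k _ hk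
    simp [PowerSeries.coeff_one, hk]
  · intro hmem
    exact absurd (Finset.mem_range.mpr (Nat.succ_pos n)) hmem

/-- `pcomp · g` as a ring homomorphism, for `g` with zero constant term. -/
noncomputable def pcompHom (g : PowerSeries ℚ) (hg : constantCoeff (R := ℚ) g = 0) :
    PowerSeries ℚ →+* PowerSeries ℚ where
  toFun f := pcomp f g
  map_one' := pcomp_one hg
  map_mul' f₁ f₂ := pcomp_mul hg f₁ f₂
  map_zero' := by ext n; simp [pcomp, coeff_mk]
  map_add' f₁ f₂ := pcomp_add f₁ f₂ g

@[simp] lemma pcompHom_apply (g : PowerSeries ℚ) (hg : constantCoeff (R := ℚ) g = 0)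
    (f : PowerSeries ℚ) : pcompHom g hg f = pcomp f g := rfl

lemma pcomp_X (hg : constantCoeff (R := ℚ) g = 0) : pcomp (X : PowerSeries ℚ) g = g := by
  ext n
  rw [coeff_pcomp hg _ (Nat.le_succ n), Finset.sum_eq_single 1]
  · simp
  · intro k _ hk
    simp [PowerSeries.coeff_X, hk]
  · intro hmem
    exact absurd (Finset.mem_range.mpr (by omega)) hmem

lemma pcomp_C (hg : constantCoeff (R := ℚ) g = 0) (a : ℚ) :
    pcomp (C (R := ℚ) a) g = C (R := ℚ) a := by
  ext n
  rw [coeff_pcomp hg _ (le_refl n), Finset.sum_eq_single 0]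
  · simp [PowerSeries.coeff_C, PowerSeries.coeff_one]
  · intro k _ hk
    simp [PowerSeries.coeff_C, hk]
  · intro hmem
    exact absurd (Finset.mem_range.mpr (Nat.succ_pos n)) hmem

lemma pcomp_X_right (f : PowerSeries ℚ) : pcomp f X = f := by
  ext n
  rw [coeff_pcomp (by simp) f (le_refl n), Finset.sum_eq_single n]
  · simp [PowerSeries.coeff_X_pow]
  · intro k _ hk
    simp [PowerSeries.coeff_X_pow, (Ne.symm hk)]
  · intro hmem
    exact absurd (Finset.mem_range.mpr (Nat.lt_succ_self n)) hmem

lemma pcomp_assoc (hg : constantCoeff (R := ℚ) g = 0) (hh : constantCoeff (R := ℚ) h = 0)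
    (f : PowerSeries ℚ) : pcomp (pcomp f g) h = pcomp f (pcomp g h) := by
  have hgh : constantCoeff (R := ℚ) (pcomp g h) = 0 := by
    rw [constantCoeff_pcomp]; exact hg
  ext n
  set P : PowerSeries ℚ := ∑ j ∈ range (n + 1), C (R := ℚ) (coeff (R := ℚ) j f) * g ^ j with hP
  have hcoefP : ∀ k, k ≤ n → coeff (R := ℚ) k (pcomp f g) = coeff (R := ℚ) k P := by
    intro k hk
    rw [coeff_pcomp hg f hk, hP, map_sum]
    exact Finset.sum_congr rfl fun j _ => (coeff_C_mul _ _ _).symm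
  have h1 : coeff (R := ℚ) n (pcomp (pcomp f g) h) = coeff (R := ℚ) n (pcomp P h) := by
    rw [coeff_pcomp hh _ (le_refl n), coeff_pcomp hh _ (le_refl n)]
    refine Finset.sum_congr rfl fun k hk => ?_
    rw [hcoefP k (Nat.lt_succ_iff.mp (Finset.mem_range.mp hk))]
  have h2 : pcomp P h = ∑ j ∈ range (n + 1), C (R := ℚ) (coeff (R := ℚ) j f) * (pcomp g h) ^ j := by
    show pcompHom h hh P = _
    rw [hP, map_sum]
    refine Finset.sum_congr rfl fun j _ => ?_
    rw [map_mul, map_pow, pcompHom_apply, pcompHom_apply, pcomp_C hh]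
  have h3 : coeff (R := ℚ) n (pcomp f (pcomp g h))
      = coeff (R := ℚ) n (∑ j ∈ range (n + 1), C (R := ℚ) (coeff (R := ℚ) j f) * (pcomp g h) ^ j) := by
    rw [coeff_pcomp hgh f (le_refl n), map_sum]
    exact Finset.sum_congr rfl fun j _ => (coeff_C_mul _ _ _).symm
  rw [h1, h2, h3]

lemma coeff_succ_pow_mul (g : PowerSeries ℚ) (k n : ℕ) :
    coeff (R := ℚ) (n + 1) (g ^ (k + 1)) * (n + 1) = (k + 1) * coeff (R := ℚ) n (g ^ k * d⁄dX ℚ g) := by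
  have hlb := Derivation.leibniz_pow (d⁄dX ℚ) g (k + 1)
  rw [Nat.add_sub_cancel, smul_eq_mul] at hlb
  have hco := congrArg (coeff (R := ℚ) n) hlb
  rw [coeff_derivative, map_nsmul, nsmul_eq_mul] at hco
  push_cast at hco ⊢
  linear_combination hco

lemma derivative_pcomp (hg : constantCoeff (R := ℚ) g = 0) (f : PowerSeries ℚ) :
    d⁄dX ℚ (pcomp f g) = pcomp (d⁄dX ℚ f) g * d⁄dX ℚ g := by
  ext n
  have hL : coeff (R := ℚ) n (d⁄dX ℚ (pcomp f g))
      = ∑ k ∈ range (n + 1), coeff (R := ℚ) (k + 1) f * ((k + 1) * coeff (R := ℚ) n (g ^ k * d⁄dX ℚ g)) := by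
    rw [coeff_derivative, coeff_pcomp hg f (le_refl (n + 1)), Finset.sum_mul,
      Finset.sum_range_succ']
    have h0 : coeff (R := ℚ) 0 f * coeff (R := ℚ) (n + 1) (g ^ 0) * (n + 1) = 0 := by
      simp [PowerSeries.coeff_one]
    rw [h0, add_zero]
    refine Finset.sum_congr rfl fun k _ => ?_
    rw [mul_assoc, coeff_succ_pow_mul]
  have hR : coeff (R := ℚ) n (pcomp (d⁄dX ℚ f) g * d⁄dX ℚ g)
      = ∑ k ∈ range (n + 1), coeff (R := ℚ) (k + 1) f * ((k + 1) * coeff (R := ℚ) n (g ^ k * d⁄dX ℚ g)) := by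
    rw [PowerSeries.coeff_mul]
    have step : ∀ p ∈ Finset.HasAntidiagonal.antidiagonal n,
        coeff (R := ℚ) p.1 (pcomp (d⁄dX ℚ f) g) * coeff (R := ℚ) p.2 (d⁄dX ℚ g)
        = ∑ k ∈ range (n + 1),
            coeff (R := ℚ) (k + 1) f * ((k + 1) * (coeff (R := ℚ) p.1 (g ^ k) * coeff (R := ℚ) p.2 (d⁄dX ℚ g))) := by
      intro p hp
      rw [coeff_pcomp hg _ (Finset.HasAntidiagonal.antidiagonal.fst_le hp), Finset.sum_mul]
      refine Finset.sum_congr rfl fun k _ => ?_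
      rw [coeff_derivative]
      push_cast
      ring
    rw [Finset.sum_congr rfl step, Finset.sum_comm]
    refine Finset.sum_congr rfl fun k _ => ?_
    rw [← Finset.mul_sum, ← Finset.mul_sum]
    congr 1
    congr 1
    exact (PowerSeries.coeff_mul _ _ _).symm
  rw [hL, hR]

lemma derivative_exp : d⁄dX ℚ (PowerSeries.exp ℚ) = PowerSeries.exp ℚ := by
  ext n
  rw [coeff_derivative, PowerSeries.coeff_exp, PowerSeries.coeff_exp]
  have hfac : ((n + 1).factorial : ℚ) = (n + 1) * (n.factorial : ℚ) := by
    push_cast [Nat.factorial_succ]; ring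
  have h1 : (n.factorial : ℚ) ≠ 0 := Nat.cast_ne_zero.mpr n.factorial_ne_zero
  have h2 : ((n : ℚ) + 1) ≠ 0 := by positivity
  simp only [eq_ratCast, Rat.cast_div, Rat.cast_one, Rat.cast_natCast] at *
  rw [hfac]
  field_simp

lemma coeff_logOneAdd (n : ℕ) :
    coeff (R := ℚ) n logOneAdd = if n = 0 then 0 else (-1 : ℚ) ^ (n + 1) / n := by
  simp [logOneAdd, coeff_mk]

lemma one_add_X_mul_derivative_log :
    (1 + X) * d⁄dX ℚ logOneAdd = 1 := by
  ext n
  rw [add_mul, one_mul, map_add]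
  cases n with
  | zero =>
    rw [coeff_derivative, coeff_logOneAdd]
    simp [PowerSeries.coeff_one, PowerSeries.constantCoeff_X]
  | succ m =>
    rw [coeff_succ_X_mul, coeff_derivative, coeff_derivative, coeff_logOneAdd, coeff_logOneAdd]
    simp only [Nat.succ_ne_zero, if_neg, Nat.add_eq_zero, and_false, ite_false,
      PowerSeries.coeff_one]
    have hm1 : ((m : ℚ) + 1) ≠ 0 := by positivity
    have hm2 : ((m : ℚ) + 1 + 1) ≠ 0 := by positivity
    push_cast
    field_simp
    ring

lemma constantCoeff_E : constantCoeff (R := ℚ) (PowerSeries.exp ℚ - 1) = 0 := by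
  simp [PowerSeries.constantCoeff_exp]

lemma pcomp_log_exp : pcomp logOneAdd (PowerSeries.exp ℚ - 1) = X := by
  set E : PowerSeries ℚ := PowerSeries.exp ℚ - 1 with hE
  have hE0 : constantCoeff (R := ℚ) E = 0 := constantCoeff_E
  have hdE : d⁄dX ℚ E = 1 + E := by
    rw [hE, map_sub, derivative_exp, Derivation.map_one_eq_zero]
    ring
  apply PowerSeries.derivative.ext (R := ℚ)
  · rw [derivative_pcomp hE0, derivative_X, hdE]
    have hkey : pcomp ((1 + X) * d⁄dX ℚ logOneAdd) E = 1 := by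
      rw [one_add_X_mul_derivative_log, pcomp_one hE0]
    rw [pcomp_mul hE0, pcomp_add, pcomp_one hE0, pcomp_X hE0] at hkey
    rw [mul_comm] at hkey
    exact hkey
  · rw [constantCoeff_pcomp, ← coeff_zero_eq_constantCoeff_apply,
      ← coeff_zero_eq_constantCoeff_apply]
    simp [logOneAdd, coeff_mk, PowerSeries.coeff_X]

lemma sq_eq_sq' {S T : PowerSeries ℚ} (hS : coeff (R := ℚ) 1 S = 1) (hT : coeff (R := ℚ) 1 T = 1)
    (h : S ^ 2 = T ^ 2) : S = T := by
  have h2 : (S - T) * (S + T) = 0 := by linear_combination h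
  rcases mul_eq_zero.mp h2 with h3 | h3
  · exact sub_eq_zero.mp h3
  · exfalso
    have := congrArg (coeff (R := ℚ) 1) h3
    rw [map_add, hS, hT] at this
    norm_num at this

end PcompAux

open PowerSeries PcompAux in
/-- With `B` and `C` the compositional inverses of `(2e^x-2-2x)^{1/2}` and
`(-2log(1+x)+2x)^{1/2}` respectively (square roots with vanishing constant term and unit
linear coefficient), `C(x) - B(x) = x²/2`; in particular the coefficients of `B` and `C`
agree in every degree except degree `2`. -/
theorem inverse_series_differ_by_sq (RB RC B C : PowerSeries ℚ)
    (hRBsq : RB ^ 2 = 2 * PowerSeries.exp ℚ - 2 - 2 * PowerSeries.X)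
    (hRB0 : PowerSeries.constantCoeff (R := ℚ) RB = 0)
    (hRB1 : PowerSeries.coeff (R := ℚ) 1 RB = 1)
    (hRCsq : RC ^ 2 = -2 * logOneAdd + 2 * PowerSeries.X)
    (hRC0 : PowerSeries.constantCoeff (R := ℚ) RC = 0)
    (hRC1 : PowerSeries.coeff (R := ℚ) 1 RC = 1)
    (hB0 : PowerSeries.constantCoeff (R := ℚ) B = 0)
    (hBRB : pcomp B RB = PowerSeries.X) (hRBB : pcomp RB B = PowerSeries.X)
    (hC0 : PowerSeries.constantCoeff (R := ℚ) C = 0)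
    (hCRC : pcomp C RC = PowerSeries.X) (hRCC : pcomp RC C = PowerSeries.X) :
    C - B = (1/2 : ℚ) • PowerSeries.X ^ 2 ∧
      ∀ n : ℕ, n ≠ 2 → PowerSeries.coeff (R := ℚ) n C = PowerSeries.coeff (R := ℚ) n B := by
  set E : PowerSeries ℚ := PowerSeries.exp ℚ - 1 with hE
  have hE0 : constantCoeff (R := ℚ) E = 0 := constantCoeff_E
  have hE1 : coeff (R := ℚ) 1 E = 1 := by
    rw [hE, map_sub, PowerSeries.coeff_exp]
    simp [PowerSeries.coeff_one, Nat.factorial]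
  -- Step A : RC ∘ E = RB
  have hA : pcomp RC E = RB := by
    apply sq_eq_sq'
    · rw [coeff_pcomp hE0 RC (le_refl 1)]
      rw [Finset.sum_range_succ, Finset.sum_range_succ, Finset.sum_range_zero]
      have h00 : coeff (R := ℚ) 0 RC = 0 := by
        rw [coeff_zero_eq_constantCoeff_apply]; exact hRC0
      simp [h00, hRC1, hE1, PowerSeries.coeff_one]
    · exact hRB1
    · have hpow : (pcomp RC E) ^ 2 = pcomp (RC ^ 2) E :=
        (map_pow (pcompHom E hE0) RC 2).symm
      rw [hpow, hRCsq]
      have hcalc : pcomp (-2 * logOneAdd + 2 * PowerSeries.X) E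
          = -2 * pcomp logOneAdd E + 2 * pcomp PowerSeries.X E := by
        show pcompHom E hE0 _ = _
        simp only [map_add, map_mul, map_neg, map_ofNat, pcompHom_apply]
      rw [hcalc, pcomp_log_exp, pcomp_X hE0, hRBsq, hE]
      ring
  -- Step B : C = E ∘ B
  set Z : PowerSeries ℚ := pcomp E B with hZ
  have hZ0 : constantCoeff (R := ℚ) Z = 0 := by
    rw [hZ, constantCoeff_pcomp]; exact hE0
  have hRCZ : pcomp RC Z = PowerSeries.X := by
    rw [hZ, ← pcomp_assoc hE0 hB0, hA, hRBB]
  have hCZ : C = Z := by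
    calc C = pcomp C PowerSeries.X := (pcomp_X_right C).symm
      _ = pcomp C (pcomp RC Z) := by rw [hRCZ]
      _ = pcomp (pcomp C RC) Z := (pcomp_assoc hRC0 hZ0 C).symm
      _ = pcomp PowerSeries.X Z := by rw [hCRC]
      _ = Z := pcomp_X hZ0
  -- Step C
  have hexpB : pcomp (PowerSeries.exp ℚ) B = C + 1 := by
    have hsplit : PowerSeries.exp ℚ = E + 1 := by rw [hE]; ring
    rw [hsplit, pcomp_add, pcomp_one hB0, ← hZ, ← hCZ]
  have hkey : 2 * C - 2 * B = PowerSeries.X ^ 2 := by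
    have hmap := congrArg (pcompHom B hB0) hRBsq
    simp only [map_pow, map_sub, map_mul, map_ofNat, pcompHom_apply] at hmap
    rw [hRBB, hexpB, pcomp_X hB0] at hmap
    linear_combination -hmap
  have h2ne : (2 : PowerSeries ℚ) ≠ 0 := by
    intro hcon
    have := congrArg (constantCoeff (R := ℚ)) hcon
    rw [map_ofNat, map_zero] at this
    norm_num at this
  have hmain : C - B = (1/2 : ℚ) • PowerSeries.X ^ 2 := by
    apply mul_left_cancel₀ h2ne
    rw [PowerSeries.smul_eq_C_mul]
    have hC2 : (2 : PowerSeries ℚ) = PowerSeries.C (R := ℚ) 2 := by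
      simp [map_ofNat]
    rw [hC2, ← mul_assoc, ← map_mul]
    norm_num
    rw [← hC2]
    linear_combination hkey
  refine ⟨hmain, fun n hn => ?_⟩
  have := congrArg (coeff (R := ℚ) n) hmain
  rw [map_sub, map_smul, PowerSeries.coeff_X_pow, if_neg hn] at this
  rw [smul_zero] at this
  linarith [this]
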